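/- Let λ₁ ≤ λ₂ ≤ λ₃ ≤ λ₄ = 0 < λ₅ ≤ λ₆ be real numbers with λ₁+⋯+λ₆ = 6H, H > 0, σ₂(λ) = 15R with R ≥ (3/5)H², σ₅(λ₁,…,λ₆) = 0, and ∑_{1≤i<j≤6}(λᵢ−λⱼ)²λᵢλⱼ ≤ 0. Then λ₁ = λ₂ = λ₃ = λ₄ = 0, λ₅ = λ₆ = 3H, and R = (3/5)H². -/

import Mathlib

/-- the `r`-th elementary symmetric function -/
def esym {n : ℕ} (x : Fin n → ℝ) (r : ℕ) : ℝ :=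
  ∑ t ∈ (Finset.univ : Finset (Fin n)).powersetCard r, ∏ i ∈ t, x i

lemma esym5_expand (l : Fin 6 → ℝ) : esym l 5 =
    l 0*l 1*l 2*l 3*l 4 + l 0*l 1*l 2*l 3*l 5 + l 0*l 1*l 2*l 4*l 5 +
    l 0*l 1*l 3*l 4*l 5 + l 0*l 2*l 3*l 4*l 5 + l 1*l 2*l 3*l 4*l 5 := by
  rw [esym, show (Finset.univ : Finset (Fin 6)).powersetCard 5 =
    {({0,1,2,3,4} : Finset (Fin 6)), {0,1,2,3,5}, {0,1,2,4,5}, {0,1,3,4,5},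
     {0,2,3,4,5}, {1,2,3,4,5}} from by decide]
  simp +decide [Finset.sum_insert, Finset.prod_insert]
  ring

lemma esym2_expand (l : Fin 6 → ℝ) : esym l 2 =
    l 0*l 1 + l 0*l 2 + l 0*l 3 + l 0*l 4 + l 0*l 5 + l 1*l 2 + l 1*l 3 + l 1*l 4 +
    l 1*l 5 + l 2*l 3 + l 2*l 4 + l 2*l 5 + l 3*l 4 + l 3*l 5 + l 4*l 5 := by
  rw [esym, show (Finset.univ : Finset (Fin 6)).powersetCard 2 =
    {({0,1} : Finset (Fin 6)), {0,2}, {0,3}, {0,4}, {0,5}, {1,2}, {1,3}, {1,4},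
     {1,5}, {2,3}, {2,4}, {2,5}, {3,4}, {3,5}, {4,5}} from by decide]
  simp +decide [Finset.sum_insert, Finset.prod_insert]
  ring

theorem stmt_13 (l : Fin 6 → ℝ) (H R : ℝ)
    (h01 : l 0 ≤ l 1) (h12 : l 1 ≤ l 2) (h23 : l 2 ≤ l 3) (h3 : l 3 = 0) (h4 : 0 < l 4)
    (h45 : l 4 ≤ l 5)
    (hH : 0 < H) (hsum : ∑ i, l i = 6 * H)
    (hR : esym l 2 = 15 * R) (hRge : (3 / 5) * H ^ 2 ≤ R)
    (hσ5 : esym l 5 = 0)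
    (hSimons : ∑ i, ∑ j ∈ Finset.univ.filter (fun j => i < j),
      (l i - l j) ^ 2 * (l i * l j) ≤ 0) :
    l 0 = 0 ∧ l 1 = 0 ∧ l 2 = 0 ∧ l 3 = 0 ∧ l 4 = 3 * H ∧ l 5 = 3 * H ∧
    R = (3 / 5) * H ^ 2 := by
  rw [esym5_expand] at hσ5
  rw [esym2_expand] at hR
  rw [Fin.sum_univ_six] at hsum
  set a := l 0; set b := l 1; set c := l 2; set e := l 4; set f := l 5
  have hb0 : b ≤ 0 := by linarith
  have ha0 : a ≤ 0 := by linarith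
  have hc0 : c ≤ 0 := by linarith
  have hf : 0 < f := lt_of_lt_of_le h4 h45
  rw [h3] at hσ5 hsum hR
  have habc : a * b * c * e * f = 0 := by nlinarith [hσ5]
  have habc' : a * b * c = 0 := by
    rcases mul_eq_zero.mp habc with h | h
    · rcases mul_eq_zero.mp h with h' | h'
      · exact h'
      · linarith
    · linarith
  have hc : c = 0 := by
    by_contra hne
    have hc' : c < 0 := lt_of_le_of_ne hc0 hne
    nlinarith [mul_nonneg (mul_nonneg (neg_nonneg.mpr ha0) (neg_nonneg.mpr hb0)) (neg_nonneg.mpr hc0)]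
  rw [hc] at hsum hR
  -- now a + b + e + f = 6H, ab + (a+b)(e+f) + ef = 15R ≥ 9H²
  have hS : a + b = 0 := by
    have h1 : a + b ≤ 0 := by linarith
    have h2 : 0 ≤ a + b := by nlinarith [sq_nonneg (a - b), sq_nonneg (e - f), sq_nonneg (a + b)]
    linarith
  have hb : b = 0 := by linarith
  have ha : a = 0 := by linarith
  rw [ha, hb] at hsum hR
  have hef : (e - f) ^ 2 ≤ 0 := by nlinarith
  have heqf : e = f := by
    have h0 : (e - f) ^ 2 = 0 := le_antisymm hef (sq_nonneg _)
    have := (pow_eq_zero_iff two_ne_zero).mp h0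
    linarith [sub_eq_zero.mp this]
  have he : e = 3 * H := by linarith [heqf, hsum]
  have hfv : f = 3 * H := by linarith
  refine ⟨ha, hb, hc, h3, he, hfv, ?_⟩
  rw [he, hfv] at hR
  linarith [hR]
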